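/- For all x, y: V → ℂ and every index i ∈ V: Φ[x*y](i) = Φ[x](i)·Φ[y](i), i.e. the discrete Fourier transform diagonalizes the convolution product. Moreover Φ: ℂ^V → ℂ^V is a linear bijection with Φ[ũ^{(i)}](j) = δ_{ij} for all i, j, so Φ^{-1} maps the i-th standard basis vector to ũ^{(i)}. -/

import Mathlib

noncomputable section

open Finset Matrix

namespace Paper

variable {V : Type*}

/-- The Hermitian product `⟨x,y⟩_h = Σ_v μ^h(v)·conj(x(v))·y(v)` with `μ^h = h^l·h^r`. -/
def innerH [Fintype V] (hl hr : V → ℝ) (x y : V → ℂ) : ℂ :=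
  ∑ v, ((hl v * hr v : ℝ) : ℂ) * (starRingEnd ℂ) (x v) * y v

/-- The h-transform `s^h = D_r⁻¹ s D_r` of a real matrix, as a complex matrix. -/
def svh [Fintype V] (s : Matrix V V ℝ) (hr : V → ℝ) : Matrix V V ℂ :=
  Matrix.of fun w w' => ((s w w' * hr w' / hr w : ℝ) : ℂ)

/-- The convolution `x*y = Σ_v h^r(v) x(v) · (s_v^h y)`. -/
def conv [Fintype V] (s : V → Matrix V V ℝ) (hr : V → ℝ) (x y : V → ℂ) : V → ℂ :=
  fun w => ∑ v, (hr v : ℂ) * x v * (svh (s v) hr).mulVec y w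

/-- The discrete Fourier transform `Φ[x](i) = ⟨w̃^{(i)}, x⟩_h`. -/
def Phi [Fintype V] (hl hr : V → ℝ) (wt : V → V → ℂ) (x : V → ℂ) : V → ℂ :=
  fun i => innerH hl hr (wt i) x

/-- the Fourier transform diagonalizes the convolution product,
`Φ[x*y](i) = Φ[x](i)Φ[y](i)`, and `Φ` is a (linear) bijection with `Φ[ũ^{(i)}](j) = δ_{ij}`. -/
theorem stmt5 [Fintype V] [DecidableEq V] [Nonempty V] (v0 : V)
    (hl hr : V → ℝ) (hlpos : ∀ v, 0 < hl v) (hrpos : ∀ v, 0 < hr v)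
    (s : V → Matrix V V ℝ)
    (ut wt : V → V → ℂ)
    (hbasis : LinearIndependent ℂ ut)
    (θ : V → V → ℂ)
    (heig : ∀ v i, (svh (s v) hr).mulVec (ut i) = θ v i • ut i)
    (hwt : ∀ i v, wt i v = (starRingEnd ℂ) (θ v i) / (hl v : ℂ))
    (hdual : ∀ i j, innerH hl hr (wt i) (ut j) = if i = j then 1 else 0) :
    (∀ x y i, Phi hl hr wt (conv s hr x y) i = Phi hl hr wt x i * Phi hl hr wt y i) ∧
    Function.Bijective (Phi hl hr wt) ∧
    (∀ i j, Phi hl hr wt (ut i) j = if i = j then 1 else 0) := by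
  classical
  have hlne : ∀ v, (hl v : ℂ) ≠ 0 := fun v => Complex.ofReal_ne_zero.mpr (hlpos v).ne'
  -- alternative formula for Phi
  have halt : ∀ (x : V → ℂ) i, Phi hl hr wt x i = ∑ v, (hr v : ℂ) * θ v i * x v := by
    intro x i
    unfold Phi innerH
    refine Finset.sum_congr rfl fun v _ => ?_
    rw [hwt i v, map_div₀]
    simp only [Complex.conj_conj, Complex.conj_ofReal]
    push_cast
    field_simp [hlne v]
  -- Phi of linear combinations
  have hsum : ∀ (c : V → ℂ) (f : V → V → ℂ) i,
      Phi hl hr wt (∑ j, c j • f j) i = ∑ j, c j * Phi hl hr wt (f j) i := by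
    intro c f i
    calc Phi hl hr wt (∑ j, c j • f j) i
        = ∑ v, ∑ j, c j * ((hr v : ℂ) * θ v i * f j v) := by
          rw [halt]
          refine Finset.sum_congr rfl fun v _ => ?_
          rw [Finset.sum_apply, Finset.mul_sum]
          exact Finset.sum_congr rfl fun j _ => by simp [smul_eq_mul]; ring
      _ = ∑ j, c j * ∑ v, (hr v : ℂ) * θ v i * f j v := by
          rw [Finset.sum_comm]
          exact Finset.sum_congr rfl fun j _ => by rw [Finset.mul_sum]
      _ = ∑ j, c j * Phi hl hr wt (f j) i := by
          exact Finset.sum_congr rfl fun j _ => by rw [halt]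
  -- basis
  have hcard : Fintype.card V = Module.finrank ℂ (V → ℂ) := by simp
  let b : Module.Basis V ℂ (V → ℂ) := basisOfLinearIndependentOfCardEqFinrank hbasis hcard
  have hb : ∀ i, b i = ut i := fun i => by
    simp [b, coe_basisOfLinearIndependentOfCardEqFinrank]
  have hrep : ∀ (x : V → ℂ) i, Phi hl hr wt x i = b.repr x i := by
    intro x i
    conv_lhs => rw [← b.sum_repr x]
    rw [hsum (fun j => b.repr x j) (fun j => b j) i]
    simp [hb, Phi, hdual]
  have hbij : Function.Bijective (Phi hl hr wt) := by
    have : Phi hl hr wt = ⇑b.equivFun := by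
      funext x i
      rw [hrep, Module.Basis.equivFun_apply]
    rw [this]
    exact b.equivFun.bijective
  refine ⟨?_, hbij, fun i j => by rw [show Phi hl hr wt (ut i) j = innerH hl hr (wt j) (ut i) from rfl, hdual j i]; simp [eq_comm]⟩
  intro x y i
  have hy : y = ∑ j, Phi hl hr wt y j • ut j := by
    conv_lhs => rw [← b.sum_repr y]
    exact Finset.sum_congr rfl fun j _ => by rw [hrep, hb]
  have hmv : ∀ w, (svh (s w) hr).mulVec y = ∑ j, Phi hl hr wt y j • (θ w j • ut j) := by
    intro w
    conv_lhs => rw [hy]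
    have h2 := map_sum ((svh (s w) hr).mulVecLin)
      (fun j => Phi hl hr wt y j • ut j) Finset.univ
    simp only [Matrix.mulVecLin_apply] at h2
    rw [h2]
    exact Finset.sum_congr rfl fun j _ => by rw [Matrix.mulVec_smul, heig w j]
  have hPhimv : ∀ w, Phi hl hr wt ((svh (s w) hr).mulVec y) i
      = Phi hl hr wt y i * θ w i := by
    intro w
    rw [hmv w, hsum]
    have : ∀ j, Phi hl hr wt y j * Phi hl hr wt (θ w j • ut j) i
        = Phi hl hr wt y j * (θ w j * (if i = j then 1 else 0)) := by
      intro j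
      congr 1
      rw [halt]
      calc (∑ v, (hr v : ℂ) * θ v i * (θ w j • ut j) v)
          = θ w j * ∑ v, (hr v : ℂ) * θ v i * ut j v := by
            rw [Finset.mul_sum]
            exact Finset.sum_congr rfl fun v _ => by simp [smul_eq_mul]; ring
        _ = θ w j * (if i = j then 1 else 0) := by rw [← halt, Phi, hdual]
    simp only [this]
    simp
  calc Phi hl hr wt (conv s hr x y) i
      = ∑ v, ∑ w, (hr w : ℂ) * x w * ((hr v : ℂ) * θ v i * (svh (s w) hr).mulVec y v) := by
        rw [halt]
        refine Finset.sum_congr rfl fun v _ => ?_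
        rw [conv, Finset.mul_sum]
        exact Finset.sum_congr rfl fun w _ => by ring
    _ = ∑ w, (hr w : ℂ) * x w * ∑ v, (hr v : ℂ) * θ v i * (svh (s w) hr).mulVec y v := by
        rw [Finset.sum_comm]
        exact Finset.sum_congr rfl fun w _ => by rw [Finset.mul_sum]
    _ = ∑ w, (hr w : ℂ) * x w * (Phi hl hr wt y i * θ w i) := by
        refine Finset.sum_congr rfl fun w _ => ?_
        rw [← halt, hPhimv w]
    _ = (∑ w, (hr w : ℂ) * θ w i * x w) * Phi hl hr wt y i := by
        rw [Finset.sum_mul]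
        exact Finset.sum_congr rfl fun w _ => by ring
    _ = Phi hl hr wt x i * Phi hl hr wt y i := by rw [← halt]

end Paper
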